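/- arXiv:2010.10030 — 2 statements merged into one kernel-verified Lean document; each statement's English description precedes it below -/
import Mathlib

section
/- (Signal-term second moment, Lemma 4 of Appendix B.) Under the channel model, for i ∈ [d] set j(i) := i if i ≤ d/2 and j(i) := i − d/2 otherwise, and define the signal-term error E_i := (1/M)·Σ_{m=1}^M ((1/(K σ_h²))·Σ_{k=1}^K |h_{m,k,j(i)}|² − 1)·Δθ_{m,i}. Then Σ_{i=1}^d E[E_i²] = (1/(K M²))·Σ_{m=1}^M E[‖Δθ_m‖²]. -/
open MeasureTheory ProbabilityTheory

noncomputable section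

/-- A complex random variable is `CN(0, σ²)`-distributed if its real and imaginary parts are
independent centered real Gaussian random variables, each of variance `σ²/2`. -/
def IsCN {Ω : Type*} [MeasurableSpace Ω] (P : Measure Ω) (σ2 : ℝ) (w : Ω → ℂ) : Prop :=
  IndepFun (fun ω => (w ω).re) (fun ω => (w ω).im) P ∧
    P.map (fun ω => (w ω).re) = gaussianReal 0 (Real.toNNReal (σ2 / 2)) ∧
    P.map (fun ω => (w ω).im) = gaussianReal 0 (Real.toNNReal (σ2 / 2))

/-- A complex random variable is centered and square-integrable with second moment `σ2`. -/
def IsCenteredL2 {Ω : Type*} [MeasurableSpace Ω] (P : Measure Ω) (σ2 : ℝ) (w : Ω → ℂ) : Prop :=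
  Measurable w ∧ MemLp w 2 P ∧ (∫ ω, w ω ∂P) = 0 ∧ (∫ ω, Complex.normSq (w ω) ∂P) = σ2

/-- The index `i` viewed in the lower half of `Fin (2*s)`. -/
def idxLo (s : ℕ) (i : Fin s) : Fin (2 * s) := ⟨i.1, by have := i.2; omega⟩

/-- The index `s + i` in the upper half of `Fin (2*s)`. -/
def idxHi (s : ℕ) (i : Fin s) : Fin (2 * s) := ⟨s + i.1, by have := i.2; omega⟩

/-- The complexified local update `c_{m,i} = Δθ_{m,i} + √(−1) Δθ_{m,d/2+i}`. -/
def cval (s : ℕ) (v : Fin (2 * s) → ℝ) (i : Fin s) : ℂ := ⟨v (idxLo s i), v (idxHi s i)⟩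

/-- Dispatcher extracting real parts on the lower half of the coordinates and imaginary
parts on the upper half: `(reImPart s y) j = Re (y j)` for `j < s` and `= Im (y (j − s))`
for `s ≤ j < 2s`. -/
def reImPart {Ω : Type*} (s : ℕ) (y : Fin s → Ω → ℂ) (j : Fin (2 * s)) (ω : Ω) : ℝ :=
  if hlt : (j : ℕ) < s then (y ⟨j.1, hlt⟩ ω).re
  else (y ⟨j.1 - s, by have := j.2; omega⟩ ω).im

/-- `jmap s i = i` for `i < s` and `i − s` otherwise (the subchannel index of coordinate `i`). -/
def jmap (s : ℕ) (i : Fin (2 * s)) : Fin s :=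
  if hlt : (i : ℕ) < s then ⟨i.1, hlt⟩ else ⟨i.1 - s, by have := i.2; omega⟩

section Helpers
open MeasureTheory ProbabilityTheory Real Set
open scoped NNReal ENNReal

lemma J_formula {b : ℝ} (hb : 0 < b) (n : ℕ) (hn : Even n) :
    ∫ x : ℝ, x ^ n * Real.exp (-b * x ^ 2)
      = b ^ (-((n : ℝ) + 1) / 2) * Real.Gamma (((n : ℝ) + 1) / 2) := by
  have h1 : (∫ x : ℝ, x ^ n * Real.exp (-b * x ^ 2))
      = 2 * ∫ x in Ioi (0:ℝ), x ^ n * Real.exp (-b * x ^ 2) := by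
    rw [← integral_comp_abs (f := fun t => t ^ n * Real.exp (-b * t ^ 2))]
    congr 1; ext x
    simp only [hn.pow_abs, sq_abs]
  rw [h1]
  have h2 : (∫ x in Ioi (0:ℝ), x ^ n * Real.exp (-b * x ^ 2))
      = ∫ x in Ioi (0:ℝ), x ^ (n : ℝ) * Real.exp (-b * x ^ (2:ℝ)) := by
    refine setIntegral_congr_fun measurableSet_Ioi (fun x hx => ?_)
    rw [Real.rpow_natCast, show ((2:ℝ)) = ((2:ℕ):ℝ) by norm_num, Real.rpow_natCast]
  rw [h2, integral_rpow_mul_exp_neg_mul_rpow (by norm_num) (lt_of_lt_of_le neg_one_lt_zero (Nat.cast_nonneg n)) hb]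
  ring

lemma pdf_eq (v : ℝ≥0) (n : ℕ) (x : ℝ) :
    gaussianPDFReal 0 v x * x ^ n
      = (Real.sqrt (2 * π * v))⁻¹ * (x ^ n * Real.exp (-(2 * (v:ℝ))⁻¹ * x ^ 2)) := by
  rw [gaussianPDFReal]
  rw [show -(x - 0) ^ 2 / (2 * (v:ℝ)) = -(2 * (v:ℝ))⁻¹ * x ^ 2 by
    rw [sub_zero, div_eq_mul_inv]; ring]
  ring

lemma integral_pow_gaussianReal (v : ℝ≥0) (hv : v ≠ 0) (n : ℕ) :
    ∫ x, x ^ n ∂(gaussianReal 0 v) = ∫ x, gaussianPDFReal 0 v x * x ^ n := by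
  rw [gaussianReal_of_var_ne_zero 0 hv]
  have hd : gaussianPDF 0 v = fun x => ((gaussianPDFReal 0 v x).toNNReal : ℝ≥0∞) := rfl
  rw [hd, integral_withDensity_eq_integral_smul (measurable_gaussianPDFReal 0 v).real_toNNReal]
  congr 1; ext x
  rw [NNReal.smul_def, Real.coe_toNNReal _ (gaussianPDFReal_nonneg 0 v x), smul_eq_mul]

lemma vpos (v : ℝ≥0) (hv : v ≠ 0) : (0:ℝ) < v :=
  NNReal.coe_pos.mpr (pos_iff_ne_zero.mpr hv)

lemma integrable_pow_gaussianReal (v : ℝ≥0) (hv : v ≠ 0) (n : ℕ) :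
    Integrable (fun x => x ^ n) (gaussianReal 0 v) := by
  rw [gaussianReal_of_var_ne_zero 0 hv]
  have hd : gaussianPDF 0 v = fun x => ((gaussianPDFReal 0 v x).toNNReal : ℝ≥0∞) := rfl
  rw [hd, integrable_withDensity_iff_integrable_smul
    (measurable_gaussianPDFReal 0 v).real_toNNReal]
  have hb : 0 < (2 * (v:ℝ))⁻¹ := by
    have := vpos v hv; positivity
  have key : Integrable (fun x : ℝ => x ^ n * Real.exp (-(2 * (v:ℝ))⁻¹ * x ^ 2)) := by
    have := integrable_rpow_mul_exp_neg_mul_sq hb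
      (s := (n : ℝ)) (lt_of_lt_of_le neg_one_lt_zero (Nat.cast_nonneg n))
    refine this.congr ?_
    filter_upwards with x
    rw [Real.rpow_natCast]
  have := key.const_mul (Real.sqrt (2 * π * v))⁻¹
  refine this.congr ?_
  filter_upwards with x
  rw [NNReal.smul_def, Real.coe_toNNReal _ (gaussianPDFReal_nonneg 0 v x), smul_eq_mul]
  exact (pdf_eq v n x).symm

lemma gauss_const (v : ℝ≥0) (hv : v ≠ 0) :
    (Real.sqrt (2 * π * v))⁻¹ *
      Real.sqrt (π / (2 * (v:ℝ))⁻¹) = 1 := by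
  have h1 : ∫ x, gaussianPDFReal 0 v x = 1 := integral_gaussianPDFReal_eq_one 0 hv
  have h2 : ∀ x, gaussianPDFReal 0 v x
      = (Real.sqrt (2 * π * v))⁻¹ * Real.exp (-(2 * (v:ℝ))⁻¹ * x ^ 2) := by
    intro x; simpa using pdf_eq v 0 x
  simp_rw [h2] at h1
  rw [integral_const_mul, integral_gaussian] at h1
  exact h1

lemma gauss_m2 (v : ℝ≥0) (hv : v ≠ 0) :
    ∫ x, x ^ 2 ∂(gaussianReal 0 v) = (v : ℝ) := by
  have hw := vpos v hv
  set w : ℝ := (v : ℝ) with hwdef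
  set b : ℝ := (2 * w)⁻¹ with hbdef
  have hb : 0 < b := by positivity
  rw [integral_pow_gaussianReal v hv 2]
  simp_rw [pdf_eq v 2]
  rw [integral_const_mul, J_formula hb 2 (by norm_num)]
  have hG : Real.Gamma ((((2:ℕ):ℝ) + 1) / 2) = Real.sqrt π / 2 := by
    rw [show (((2:ℕ):ℝ) + 1)/2 = 1/2 + 1 by norm_num, Real.Gamma_add_one (by norm_num),
      Real.Gamma_one_half_eq]
    ring
  have hb32 : b ^ (-(((2:ℕ):ℝ) + 1) / 2) = (Real.sqrt b)⁻¹ * b⁻¹ := by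
    rw [show -(((2:ℕ):ℝ) + 1)/2 = -(1/2) + (-1) by norm_num, Real.rpow_add hb,
      Real.rpow_neg_one, Real.rpow_neg hb.le, ← Real.sqrt_eq_rpow]
  rw [hG, hb32]
  have hsq : Real.sqrt (π / b) = Real.sqrt π / Real.sqrt b := Real.sqrt_div pi_pos.le b
  have hC := gauss_const v hv
  rw [hsq] at hC
  have hsb : Real.sqrt b ≠ 0 := (Real.sqrt_pos.mpr hb).ne'
  have hpi : Real.sqrt π ≠ 0 := (Real.sqrt_pos.mpr pi_pos).ne'
  have key : (Real.sqrt (2 * π * v))⁻¹ * ((Real.sqrt b)⁻¹ * b⁻¹ * (Real.sqrt π / 2))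
      = ((Real.sqrt (2 * π * v))⁻¹ * (Real.sqrt π / Real.sqrt b)) * (2 * b)⁻¹ := by
    rw [mul_inv, div_eq_mul_inv, div_eq_mul_inv]
    ring
  rw [key, hC, one_mul, hbdef]
  rw [mul_inv, inv_inv]
  ring

lemma gauss_m4 (v : ℝ≥0) (hv : v ≠ 0) :
    ∫ x, x ^ 4 ∂(gaussianReal 0 v) = 3 * (v : ℝ) ^ 2 := by
  have hw := vpos v hv
  set w : ℝ := (v : ℝ) with hwdef
  set b : ℝ := (2 * w)⁻¹ with hbdef
  have hb : 0 < b := by positivity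
  rw [integral_pow_gaussianReal v hv 4]
  simp_rw [pdf_eq v 4]
  rw [integral_const_mul, J_formula hb 4 ⟨2, rfl⟩]
  have hG : Real.Gamma ((((4:ℕ):ℝ) + 1) / 2) = 3 * Real.sqrt π / 4 := by
    rw [show (((4:ℕ):ℝ) + 1)/2 = 3/2 + 1 by norm_num, Real.Gamma_add_one (by norm_num),
      show (3:ℝ)/2 = 1/2 + 1 by norm_num, Real.Gamma_add_one (by norm_num),
      Real.Gamma_one_half_eq]
    ring
  have hb52 : b ^ (-(((4:ℕ):ℝ) + 1) / 2) = (Real.sqrt b)⁻¹ * (b ^ 2)⁻¹ := by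
    rw [show -(((4:ℕ):ℝ) + 1)/2 = -(1/2) + (-((2:ℕ):ℝ)) by norm_num, Real.rpow_add hb,
      Real.rpow_neg hb.le (1/2), ← Real.sqrt_eq_rpow,
      Real.rpow_neg hb.le ((2:ℕ):ℝ), Real.rpow_natCast]
  rw [hG, hb52]
  have hsq : Real.sqrt (π / b) = Real.sqrt π / Real.sqrt b := Real.sqrt_div pi_pos.le b
  have hC := gauss_const v hv
  rw [hsq] at hC
  have hsb : Real.sqrt b ≠ 0 := (Real.sqrt_pos.mpr hb).ne'
  have hpi : Real.sqrt π ≠ 0 := (Real.sqrt_pos.mpr pi_pos).ne'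
  have key : (Real.sqrt (2 * π * v))⁻¹ * ((Real.sqrt b)⁻¹ * (b ^ 2)⁻¹ * (3 * Real.sqrt π / 4))
      = ((Real.sqrt (2 * π * v))⁻¹ * (Real.sqrt π / Real.sqrt b)) * (3 * (4 * b ^ 2)⁻¹) := by
    rw [mul_inv, div_eq_mul_inv, div_eq_mul_inv]
    ring
  rw [key, hC, one_mul, hbdef]
  rw [inv_pow, mul_inv, inv_inv, mul_pow]
  ring

lemma map_moments {Ω : Type*} [MeasurableSpace Ω] {P : Measure Ω} {v : ℝ≥0} (hv : v ≠ 0)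
    {f : Ω → ℝ} (hf : Measurable f) (hmap : P.map f = gaussianReal 0 v) (n : ℕ) :
    Integrable (fun ω => f ω ^ n) P ∧
      (∫ ω, f ω ^ n ∂P) = ∫ x, x ^ n ∂(gaussianReal 0 v) := by
  have hgm : Measurable fun x : ℝ => x ^ n := by fun_prop
  constructor
  · have hi := integrable_pow_gaussianReal v hv n
    rw [← hmap] at hi
    exact (integrable_map_measure hgm.aestronglyMeasurable hf.aemeasurable).mp hi
  · rw [← hmap, integral_map hf.aemeasurable hgm.aestronglyMeasurable]


lemma cn_moments {Ω : Type*} [MeasurableSpace Ω] (P : Measure Ω) [IsProbabilityMeasure P]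
    {σ2 : ℝ} (hσ2 : 0 < σ2) {w : Ω → ℂ} (hw : Measurable w) (hCN : IsCN P σ2 w) :
    Integrable (fun ω => Complex.normSq (w ω)) P ∧
    (∫ ω, Complex.normSq (w ω) ∂P) = σ2 ∧
    Integrable (fun ω => Complex.normSq (w ω) * Complex.normSq (w ω)) P ∧
    (∫ ω, Complex.normSq (w ω) * Complex.normSq (w ω) ∂P) = 2 * σ2 ^ 2 := by
  obtain ⟨hind, hre, him⟩ := hCN
  set v : ℝ≥0 := Real.toNNReal (σ2 / 2) with hvdef
  have hv : v ≠ 0 := by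
    rw [hvdef, Ne, Real.toNNReal_eq_zero]
    exact not_le.mpr (by linarith)
  have hvc : (v : ℝ) = σ2 / 2 := Real.coe_toNNReal _ (by linarith)
  have hfm : Measurable fun ω => (w ω).re := Complex.measurable_re.comp hw
  have hgm : Measurable fun ω => (w ω).im := Complex.measurable_im.comp hw
  have hre2 := map_moments hv hfm hre 2
  have him2 := map_moments hv hgm him 2
  have hre4 := map_moments hv hfm hre 4
  have him4 := map_moments hv hgm him 4
  have hre2v : (∫ ω, (w ω).re ^ 2 ∂P) = (v : ℝ) := by rw [hre2.2, gauss_m2 v hv]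
  have him2v : (∫ ω, (w ω).im ^ 2 ∂P) = (v : ℝ) := by rw [him2.2, gauss_m2 v hv]
  have hre4v : (∫ ω, (w ω).re ^ 4 ∂P) = 3 * (v : ℝ) ^ 2 := by rw [hre4.2, gauss_m4 v hv]
  have him4v : (∫ ω, (w ω).im ^ 4 ∂P) = 3 * (v : ℝ) ^ 2 := by rw [him4.2, gauss_m4 v hv]
  have hindsq : IndepFun (fun ω => (w ω).re ^ 2) (fun ω => (w ω).im ^ 2) P :=
    hind.comp (measurable_id.pow_const 2) (measurable_id.pow_const 2)
  have intcross : Integrable (fun ω => (w ω).re ^ 2 * (w ω).im ^ 2) P :=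
    hindsq.integrable_mul hre2.1 him2.1
  have crossv : (∫ ω, (w ω).re ^ 2 * (w ω).im ^ 2 ∂P) = (v : ℝ) * (v : ℝ) := by
    have heq : (fun ω => (w ω).re ^ 2 * (w ω).im ^ 2)
        = (fun ω => (w ω).re ^ 2) * (fun ω => (w ω).im ^ 2) := rfl
    rw [heq, hindsq.integral_mul_eq_mul_integral hre2.1.aestronglyMeasurable him2.1.aestronglyMeasurable, hre2v, him2v]
  have hptY : ∀ ω, Complex.normSq (w ω) = (w ω).re ^ 2 + (w ω).im ^ 2 := fun ω => by
    rw [Complex.normSq_apply]; ring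
  refine ⟨?_, ?_, ?_, ?_⟩
  · exact (hre2.1.add him2.1).congr
      (Filter.Eventually.of_forall fun ω => (hptY ω).symm)
  · rw [integral_congr_ae (Filter.Eventually.of_forall hptY),
      integral_add hre2.1 him2.1, hre2v, him2v, hvc]
    ring
  · have : Integrable (fun ω => (w ω).re ^ 4 + 2 * ((w ω).re ^ 2 * (w ω).im ^ 2)
        + (w ω).im ^ 4) P := ((hre4.1.add (intcross.const_mul 2)).add him4.1)
    refine this.congr (Filter.Eventually.of_forall fun ω => ?_)
    simp only [hptY]; ring
  · have hpt2 : ∀ ω, Complex.normSq (w ω) * Complex.normSq (w ω)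
        = (w ω).re ^ 4 + 2 * ((w ω).re ^ 2 * (w ω).im ^ 2) + (w ω).im ^ 4 := fun ω => by
      simp only [hptY]; ring
    have hB : Integrable (fun ω => 2 * ((w ω).re ^ 2 * (w ω).im ^ 2)) P :=
      intcross.const_mul 2
    have hAB : Integrable (fun ω => (w ω).re ^ 4 + 2 * ((w ω).re ^ 2 * (w ω).im ^ 2)) P :=
      hre4.1.add hB
    have I12 : (∫ ω, ((w ω).re ^ 4 + 2 * ((w ω).re ^ 2 * (w ω).im ^ 2)) ∂P)
        = 3 * (v:ℝ) ^ 2 + 2 * ((v:ℝ) * (v:ℝ)) := by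
      rw [integral_add hre4.1 hB, integral_const_mul, hre4v, crossv]
    have Iall : (∫ ω, ((w ω).re ^ 4 + 2 * ((w ω).re ^ 2 * (w ω).im ^ 2) + (w ω).im ^ 4) ∂P)
        = (3 * (v:ℝ) ^ 2 + 2 * ((v:ℝ) * (v:ℝ))) + 3 * (v:ℝ) ^ 2 := by
      rw [integral_add hAB him4.1, I12, him4v]
    rw [integral_congr_ae (Filter.Eventually.of_forall hpt2), Iall, hvc]
    ring

end Helpers

/-- **Signal-term second moment (Lemma 4 of Appendix B).**  Under the channel model with
mutually independent `CN(0, σ_h²)` gains `h m k i`, independent of the square-integrable local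
updates `Δθ m`, the signal-term error
`E_i = (1/M) ∑ₘ ((1/(K σ_h²)) ∑ₖ |h m k (j i)|² − 1) Δθ_{m,i}` satisfies
`∑_{i=1}^d E[E_i²] = (1/(K M²)) ∑ₘ E[‖Δθ m‖²]`. -/
theorem signal_term_second_moment
    {Ω : Type*} [MeasurableSpace Ω] (P : Measure Ω) [IsProbabilityMeasure P]
    (M K s : ℕ) (hM : 1 ≤ M) (hK : 1 ≤ K) (hs : 1 ≤ s)
    (σh : ℝ) (hσh : 0 < σh)
    (h : Fin M → Fin K → Fin s → Ω → ℂ)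
    (hhmeas : ∀ m k i, Measurable (h m k i))
    (hhCN : ∀ m k i, IsCN P (σh ^ 2) (h m k i))
    (Δθ : Fin M → Ω → Fin (2 * s) → ℝ)
    (hΔmeas : ∀ m, Measurable (Δθ m))
    (hΔL2 : ∀ m (j : Fin (2 * s)), MemLp (fun ω => Δθ m ω j) 2 P)
    (hindep : iIndepFun
      (fun p : Fin M × Fin K × Fin s => h p.1 p.2.1 p.2.2) P)
    (hcross : IndepFun
      (fun ω => fun p : Fin M × Fin K × Fin s => h p.1 p.2.1 p.2.2 ω)
      (fun ω => fun m : Fin M => Δθ m ω) P) :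
    ∑ i : Fin (2 * s),
        (∫ ω, ((M : ℝ)⁻¹ * ∑ m, (((K : ℝ) * σh ^ 2)⁻¹ *
            (∑ k, Complex.normSq (h m k (jmap s i) ω)) - 1) * Δθ m ω i) ^ 2 ∂P)
      = ((K : ℝ) * (M : ℝ) ^ 2)⁻¹ *
        ∑ m, (∫ ω, ∑ j : Fin (2 * s), (Δθ m ω j) ^ 2 ∂P) := by
  classical
  have hσ2 : (0:ℝ) < σh ^ 2 := by positivity
  have hKne : ((K:ℝ)) ≠ 0 := by
    have hh : (0:ℕ) < K := hK
    exact_mod_cast hh.ne'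
  set σ2 : ℝ := σh ^ 2 with hσ2def
  have hσne : σ2 ≠ 0 := hσ2.ne'
  set c : ℝ := ((K:ℝ) * σ2)⁻¹ with hcdef
  -- second moments of |h|² products
  have EYY : ∀ (m m' : Fin M) (k k' : Fin K) (j j' : Fin s),
      Integrable (fun ω => Complex.normSq (h m k j ω) * Complex.normSq (h m' k' j' ω)) P ∧
      (∫ ω, Complex.normSq (h m k j ω) * Complex.normSq (h m' k' j' ω) ∂P)
        = (if m = m' ∧ k = k' ∧ j = j' then 2 * σ2 ^ 2 else σ2 ^ 2) := by
    intro m m' k k' j j'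
    have hmom1 := cn_moments P hσ2 (hhmeas m k j) (hhCN m k j)
    have hmom2 := cn_moments P hσ2 (hhmeas m' k' j') (hhCN m' k' j')
    by_cases hab : m = m' ∧ k = k' ∧ j = j'
    · obtain ⟨h1, h2, h3⟩ := hab
      subst h1; subst h2; subst h3
      rw [if_pos ⟨rfl, rfl, rfl⟩]
      exact ⟨hmom1.2.2.1, hmom1.2.2.2⟩
    · have hne : ((m, k, j) : Fin M × Fin K × Fin s) ≠ (m', k', j') := by
        simp only [Ne, Prod.mk.injEq]
        exact hab
      have hZind : IndepFun (fun ω => Complex.normSq (h m k j ω))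
          (fun ω => Complex.normSq (h m' k' j' ω)) P :=
        (hindep.indepFun hne).comp Complex.continuous_normSq.measurable
          Complex.continuous_normSq.measurable
      have hint : Integrable ((fun ω => Complex.normSq (h m k j ω)) *
          (fun ω => Complex.normSq (h m' k' j' ω))) P :=
        hZind.integrable_mul hmom1.1 hmom2.1
      refine ⟨hint, ?_⟩
      have heq : (fun ω => Complex.normSq (h m k j ω) * Complex.normSq (h m' k' j' ω))
          = (fun ω => Complex.normSq (h m k j ω)) *
            (fun ω => Complex.normSq (h m' k' j' ω)) := rfl
      rw [heq, hZind.integral_mul_eq_mul_integral hmom1.1.aestronglyMeasurable hmom2.1.aestronglyMeasurable,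
        hmom1.2.1, hmom2.2.1, if_neg hab]
      ring
  -- sums over k
  have intS : ∀ (m : Fin M) (j : Fin s),
      Integrable (fun ω => ∑ k, Complex.normSq (h m k j ω)) P := fun m j =>
    integrable_finset_sum _ (fun k _ => (cn_moments P hσ2 (hhmeas m k j) (hhCN m k j)).1)
  have ES : ∀ (m : Fin M) (j : Fin s),
      (∫ ω, ∑ k, Complex.normSq (h m k j ω) ∂P) = (K:ℝ) * σ2 := by
    intro m j
    rw [integral_finset_sum _ (fun k _ => (cn_moments P hσ2 (hhmeas m k j) (hhCN m k j)).1),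
      Finset.sum_congr rfl (fun k _ => (cn_moments P hσ2 (hhmeas m k j) (hhCN m k j)).2.1),
      Finset.sum_const, Finset.card_univ, Fintype.card_fin, nsmul_eq_mul]
  have intSS : ∀ (m m' : Fin M) (j : Fin s),
      Integrable (fun ω => (∑ k, Complex.normSq (h m k j ω)) *
        (∑ k, Complex.normSq (h m' k j ω))) P := by
    intro m m' j
    have heq : (fun ω => (∑ k, Complex.normSq (h m k j ω)) *
          (∑ k, Complex.normSq (h m' k j ω)))
        = fun ω => ∑ k, ∑ k', Complex.normSq (h m k j ω) * Complex.normSq (h m' k' j ω) := by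
      funext ω; rw [Finset.sum_mul_sum]
    rw [heq]
    exact integrable_finset_sum _ (fun k _ =>
      integrable_finset_sum _ (fun k' _ => (EYY m m' k k' j j).1))
  have ESS : ∀ (m m' : Fin M) (j : Fin s),
      (∫ ω, (∑ k, Complex.normSq (h m k j ω)) * (∑ k, Complex.normSq (h m' k j ω)) ∂P)
        = (K:ℝ)^2 * σ2^2 + (if m = m' then (K:ℝ) * σ2^2 else 0) := by
    intro m m' j
    have heq : (fun ω => (∑ k, Complex.normSq (h m k j ω)) *
          (∑ k, Complex.normSq (h m' k j ω)))
        = fun ω => ∑ k, ∑ k', Complex.normSq (h m k j ω) * Complex.normSq (h m' k' j ω) := by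
      funext ω; rw [Finset.sum_mul_sum]
    rw [show (∫ ω, (∑ k, Complex.normSq (h m k j ω)) *
          (∑ k, Complex.normSq (h m' k j ω)) ∂P)
        = ∫ ω, ∑ k, ∑ k', Complex.normSq (h m k j ω) * Complex.normSq (h m' k' j ω) ∂P from
      congrArg _ heq]
    rw [integral_finset_sum _ (fun k _ =>
      integrable_finset_sum _ (fun k' _ => (EYY m m' k k' j j).1))]
    rw [Finset.sum_congr rfl (fun k _ => integral_finset_sum _
      (fun k' _ => (EYY m m' k k' j j).1))]
    rw [Finset.sum_congr rfl (fun k _ => Finset.sum_congr rfl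
      (fun k' _ => (EYY m m' k k' j j).2))]
    by_cases hm : m = m'
    · subst hm
      rw [if_pos rfl]
      have inner : ∀ k : Fin K, (∑ k' : Fin K,
          if m = m ∧ k = k' ∧ j = j then 2 * σ2 ^ 2 else σ2 ^ 2)
          = (K:ℝ) * σ2^2 + σ2^2 := by
        intro k
        rw [Finset.sum_congr rfl (fun k' _ => show
            (if m = m ∧ k = k' ∧ j = j then 2 * σ2 ^ 2 else σ2 ^ 2)
            = σ2^2 + (if k = k' then σ2^2 else 0) by
          by_cases hk : k = k'
          · rw [if_pos ⟨rfl, hk, rfl⟩, if_pos hk]; ring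
          · rw [if_neg (fun hc => hk hc.2.1), if_neg hk]; ring)]
        rw [Finset.sum_add_distrib, Finset.sum_const, Finset.card_univ, Fintype.card_fin,
          nsmul_eq_mul, Finset.sum_ite_eq, if_pos (Finset.mem_univ k)]
      rw [Finset.sum_congr rfl (fun k _ => inner k), Finset.sum_const, Finset.card_univ,
        Fintype.card_fin, nsmul_eq_mul]
      ring
    · rw [if_neg hm]
      rw [Finset.sum_congr rfl (fun k _ => Finset.sum_congr rfl (fun k' _ =>
        if_neg (fun hc => hm hc.1)))]
      rw [Finset.sum_const, Finset.card_univ, Fintype.card_fin, nsmul_eq_mul,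
        Finset.sum_const, Finset.card_univ, Fintype.card_fin, nsmul_eq_mul]
      ring
  -- products of the centered normalized sums
  have hXpt : ∀ (m m' : Fin M) (j : Fin s) (ω : Ω),
      (c * (∑ k, Complex.normSq (h m k j ω)) - 1) *
        (c * (∑ k, Complex.normSq (h m' k j ω)) - 1)
      = c * c * ((∑ k, Complex.normSq (h m k j ω)) * (∑ k, Complex.normSq (h m' k j ω)))
        - c * (∑ k, Complex.normSq (h m k j ω)) - c * (∑ k, Complex.normSq (h m' k j ω))
        + 1 := by
    intro m m' j ω; ring
  have intXX : ∀ (m m' : Fin M) (j : Fin s),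
      Integrable (fun ω => (c * (∑ k, Complex.normSq (h m k j ω)) - 1) *
        (c * (∑ k, Complex.normSq (h m' k j ω)) - 1)) P := by
    intro m m' j
    have hint : Integrable (fun ω =>
        c * c * ((∑ k, Complex.normSq (h m k j ω)) * (∑ k, Complex.normSq (h m' k j ω)))
        - c * (∑ k, Complex.normSq (h m k j ω)) - c * (∑ k, Complex.normSq (h m' k j ω))
        + 1) P :=
      ((((intSS m m' j).const_mul (c*c)).sub ((intS m j).const_mul c)).sub
        ((intS m' j).const_mul c)).add (integrable_const 1)
    exact hint.congr (Filter.Eventually.of_forall (fun ω => (hXpt m m' j ω).symm))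
  have EXX : ∀ (m m' : Fin M) (j : Fin s),
      (∫ ω, (c * (∑ k, Complex.normSq (h m k j ω)) - 1) *
        (c * (∑ k, Complex.normSq (h m' k j ω)) - 1) ∂P)
      = (if m = m' then (K:ℝ)⁻¹ else 0) := by
    intro m m' j
    have hA : Integrable (fun ω => c * c * ((∑ k, Complex.normSq (h m k j ω)) *
        (∑ k, Complex.normSq (h m' k j ω)))) P := (intSS m m' j).const_mul _
    have hB : Integrable (fun ω => c * (∑ k, Complex.normSq (h m k j ω))) P :=
      (intS m j).const_mul c
    have hB' : Integrable (fun ω => c * (∑ k, Complex.normSq (h m' k j ω))) P :=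
      (intS m' j).const_mul c
    have hAB : Integrable (fun ω => c * c * ((∑ k, Complex.normSq (h m k j ω)) *
        (∑ k, Complex.normSq (h m' k j ω))) - c * (∑ k, Complex.normSq (h m k j ω))) P :=
      hA.sub hB
    have hABB' : Integrable (fun ω => c * c * ((∑ k, Complex.normSq (h m k j ω)) *
        (∑ k, Complex.normSq (h m' k j ω))) - c * (∑ k, Complex.normSq (h m k j ω))
        - c * (∑ k, Complex.normSq (h m' k j ω))) P := hAB.sub hB'
    rw [integral_congr_ae (Filter.Eventually.of_forall (hXpt m m' j))]
    rw [integral_add hABB' (integrable_const 1), integral_sub hAB hB', integral_sub hA hB,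
      integral_const_mul, integral_const_mul, integral_const_mul, ESS m m' j, ES m j, ES m' j,
      integral_const]
    simp only [measure_univ, ENNReal.toReal_one, probReal_univ, smul_eq_mul, mul_one, one_mul]
    by_cases hm : m = m'
    · rw [if_pos hm, if_pos hm, hcdef]
      field_simp
      ring
    · rw [if_neg hm, if_neg hm, hcdef]
      field_simp
      ring
  -- independence of channel functionals from the updates
  have hFG : ∀ (m m' : Fin M) (j : Fin s) (i : Fin (2*s)),
      IndepFun (fun ω => (c * (∑ k, Complex.normSq (h m k j ω)) - 1) *
          (c * (∑ k, Complex.normSq (h m' k j ω)) - 1))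
        (fun ω => Δθ m ω i * Δθ m' ω i) P := by
    intro m m' j i
    have hsum : ∀ m'' : Fin M, Measurable (fun u : Fin M × Fin K × Fin s → ℂ =>
        (∑ k, Complex.normSq (u (m'', k, j)))) := fun m'' =>
      Finset.measurable_sum _ (fun k _ =>
        Complex.continuous_normSq.measurable.comp (measurable_pi_apply _))
    have hφ : Measurable (fun u : Fin M × Fin K × Fin s → ℂ =>
        (c * (∑ k, Complex.normSq (u (m, k, j))) - 1) *
        (c * (∑ k, Complex.normSq (u (m', k, j))) - 1)) :=
      (((hsum m).const_mul c).sub measurable_const).mul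
        (((hsum m').const_mul c).sub measurable_const)
    have hψ : Measurable (fun v : Fin M → Fin (2*s) → ℝ => v m i * v m' i) :=
      by fun_prop
    exact hcross.comp hφ hψ
  have intΔΔ : ∀ (m m' : Fin M) (i : Fin (2*s)),
      Integrable (fun ω => Δθ m ω i * Δθ m' ω i) P := by
    intro m m' i
    have hmem : MemLp ((fun ω => Δθ m ω i) • (fun ω => Δθ m' ω i)) 1 P :=
      (hΔL2 m' i).smul (hΔL2 m i)
    exact memLp_one_iff_integrable.mp hmem
  -- the per-coordinate identity
  have key : ∀ i : Fin (2*s),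
      (∫ ω, ((M : ℝ)⁻¹ * ∑ m, (c *
          (∑ k, Complex.normSq (h m k (jmap s i) ω)) - 1) * Δθ m ω i) ^ 2 ∂P)
        = ((M:ℝ)⁻¹)^2 * ∑ m, ((K:ℝ)⁻¹ * ∫ ω, (Δθ m ω i)^2 ∂P) := by
    intro i
    set j : Fin s := jmap s i with hjdef
    have hterm_int : ∀ m m' : Fin M, Integrable (fun ω =>
        ((c * (∑ k, Complex.normSq (h m k j ω)) - 1) *
          (c * (∑ k, Complex.normSq (h m' k j ω)) - 1)) * (Δθ m ω i * Δθ m' ω i)) P := by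
      intro m m'
      have := (hFG m m' j i).integrable_mul (intXX m m' j) (intΔΔ m m' i)
      exact this
    have hterm_val : ∀ m m' : Fin M, (∫ ω,
        ((c * (∑ k, Complex.normSq (h m k j ω)) - 1) *
          (c * (∑ k, Complex.normSq (h m' k j ω)) - 1)) * (Δθ m ω i * Δθ m' ω i) ∂P)
        = (if m = m' then (K:ℝ)⁻¹ else 0) * ∫ ω, Δθ m ω i * Δθ m' ω i ∂P := by
      intro m m'
      have heq : (fun ω => ((c * (∑ k, Complex.normSq (h m k j ω)) - 1) *
            (c * (∑ k, Complex.normSq (h m' k j ω)) - 1)) * (Δθ m ω i * Δθ m' ω i))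
          = (fun ω => (c * (∑ k, Complex.normSq (h m k j ω)) - 1) *
            (c * (∑ k, Complex.normSq (h m' k j ω)) - 1)) *
            (fun ω => Δθ m ω i * Δθ m' ω i) := rfl
      rw [heq, (hFG m m' j i).integral_mul_eq_mul_integral (intXX m m' j).aestronglyMeasurable (intΔΔ m m' i).aestronglyMeasurable,
        EXX m m' j]
    have hpt : ∀ ω, ((M : ℝ)⁻¹ * ∑ m, (c *
          (∑ k, Complex.normSq (h m k j ω)) - 1) * Δθ m ω i) ^ 2
        = ((M:ℝ)⁻¹)^2 * ∑ m, ∑ m',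
          ((c * (∑ k, Complex.normSq (h m k j ω)) - 1) *
            (c * (∑ k, Complex.normSq (h m' k j ω)) - 1)) * (Δθ m ω i * Δθ m' ω i) := by
      intro ω
      rw [mul_pow, sq (∑ m, (c * (∑ k, Complex.normSq (h m k j ω)) - 1) * Δθ m ω i),
        Finset.sum_mul_sum]
      congr 1
      refine Finset.sum_congr rfl fun m _ => Finset.sum_congr rfl fun m' _ => ?_
      ring
    rw [integral_congr_ae (Filter.Eventually.of_forall hpt), integral_const_mul]
    congr 1
    rw [integral_finset_sum _ (fun m _ => integrable_finset_sum _
      (fun m' _ => hterm_int m m'))]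
    refine Finset.sum_congr rfl fun m _ => ?_
    rw [integral_finset_sum _ (fun m' _ => hterm_int m m'),
      Finset.sum_congr rfl (fun m' _ => hterm_val m m')]
    simp only [ite_mul, zero_mul, Finset.sum_ite_eq, Finset.mem_univ, if_true]
    congr 1
    refine integral_congr_ae (Filter.Eventually.of_forall fun ω => ?_)
    show Δθ m ω i * Δθ m ω i = Δθ m ω i ^ 2
    rw [pow_two]
  rw [Finset.sum_congr rfl (fun i (_ : i ∈ Finset.univ) => key i),
    Finset.sum_congr rfl (fun m (_ : m ∈ Finset.univ) => integral_finset_sum _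
      (fun j _ => (hΔL2 m j).integrable_sq))]
  simp only [Finset.mul_sum]
  rw [Finset.sum_comm]
  refine Finset.sum_congr rfl fun m _ => Finset.sum_congr rfl fun i _ => ?_
  rw [mul_inv, inv_pow]
  ring
end
end

section
/- (Lemma TermE, deterministic core of Appendix D.) Let F_m : ℝ^d → ℝ, m ∈ [M], be differentiable and μ-strongly convex with F_m* := inf F_m, let F := (1/M)·Σ_m F_m have global minimizer θ* with F* := F(θ*), and set Γ := F* − (1/M)·Σ_m F_m*. Let τ ≥ 1, 0 < η ≤ 1, θ ∈ ℝ^d, and let θ_m^i ∈ ℝ^d be arbitrary points for m ∈ [M] and i = 2, …, τ. Then (2η/M)·Σ_{m=1}^M Σ_{i=2}^τ ⟨θ* − θ_m^i, ∇F_m(θ_m^i)⟩ ≤ −μη(1−η)(τ−1)·‖θ − θ*‖² + (μ(1−η)/M)·Σ_{m=1}^M Σ_{i=2}^τ ‖θ_m^i − θ‖² + 2η(τ−1)·Γ. -/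
open RealInnerProductSpace

set_option maxHeartbeats 1600000 in
/-- **Lemma TermE (deterministic core of Appendix D).**  Let the `F m` be differentiable and
`μ`-strongly convex with infima `F m* = inf F m`, let `F̄ = (1/M) ∑ₘ F m` have global minimizer
`θ*`, and set `Γ = F̄ θ* − (1/M) ∑ₘ F m*`.  For `τ ≥ 1`, `0 < η ≤ 1`, any `θ` and arbitrary
points `θ_m^i` (`m ∈ [M]`, `i = 2, …, τ`),
`(2η/M) ∑ₘ ∑_{i=2}^τ ⟪θ* − θ_m^i, ∇F m (θ_m^i)⟫
  ≤ −μη(1−η)(τ−1) ‖θ − θ*‖² + (μ(1−η)/M) ∑ₘ ∑_{i=2}^τ ‖θ_m^i − θ‖² + 2η(τ−1) Γ`. -/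
theorem lemma_termE
    (d M τ : ℕ) (hM : 1 ≤ M) (hτ : 1 ≤ τ) (μ : ℝ) (hμ : 0 < μ)
    (η : ℝ) (hη0 : 0 < η) (hη1 : η ≤ 1)
    (F : Fin M → EuclideanSpace ℝ (Fin d) → ℝ)
    (hdiff : ∀ m, Differentiable ℝ (F m))
    (hsc : ∀ m (v w : EuclideanSpace ℝ (Fin d)),
      F m w + ⟪v - w, gradient (F m) w⟫ + μ / 2 * ‖v - w‖ ^ 2 ≤ F m v)
    (Fbar : EuclideanSpace ℝ (Fin d) → ℝ)
    (hFbar : ∀ v, Fbar v = (M : ℝ)⁻¹ * ∑ m, F m v)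
    (θstar : EuclideanSpace ℝ (Fin d)) (hmin : ∀ v, Fbar θstar ≤ Fbar v)
    (Γ : ℝ) (hΓ : Γ = Fbar θstar - (M : ℝ)⁻¹ * ∑ m, sInf (Set.range (F m)))
    (θ : EuclideanSpace ℝ (Fin d))
    (θl : Fin M → ℕ → EuclideanSpace ℝ (Fin d)) :
    2 * η / (M : ℝ) * ∑ m, ∑ i ∈ Finset.Icc 2 τ, ⟪θstar - θl m i, gradient (F m) (θl m i)⟫
      ≤ -μ * η * (1 - η) * ((τ : ℝ) - 1) * ‖θ - θstar‖ ^ 2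
        + μ * (1 - η) / (M : ℝ) * ∑ m, ∑ i ∈ Finset.Icc 2 τ, ‖θl m i - θ‖ ^ 2
        + 2 * η * ((τ : ℝ) - 1) * Γ := by
  have hMpos : (0:ℝ) < (M:ℝ) := by exact_mod_cast hM
  -- each F m is bounded below
  have hbdd : ∀ m, BddBelow (Set.range (F m)) := by
    intro m
    refine ⟨F m 0 - ‖gradient (F m) 0‖ ^ 2 / (2 * μ), ?_⟩
    rintro _ ⟨v, rfl⟩
    have h := hsc m v 0
    have hip : -(‖v - 0‖ * ‖gradient (F m) 0‖) ≤ ⟪v - 0, gradient (F m) 0⟫ := by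
      have := abs_real_inner_le_norm (v - 0) (gradient (F m) 0)
      have := neg_abs_le (⟪v - 0, gradient (F m) 0⟫ : ℝ)
      linarith
    have hv : (0:ℝ) ≤ ‖v - 0‖ := norm_nonneg _
    have hg : (0:ℝ) ≤ ‖gradient (F m) 0‖ := norm_nonneg _
    have hq : ‖v - 0‖ * ‖gradient (F m) 0‖ - μ / 2 * ‖v - 0‖ ^ 2
        ≤ ‖gradient (F m) 0‖ ^ 2 / (2 * μ) := by
      rw [le_div_iff₀ (by positivity : (0:ℝ) < 2 * μ)]
      nlinarith [sq_nonneg (μ * ‖v - 0‖ - ‖gradient (F m) 0‖)]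
    linarith
  have hinf_le : ∀ m (v : EuclideanSpace ℝ (Fin d)), sInf (Set.range (F m)) ≤ F m v :=
    fun m v => csInf_le (hbdd m) ⟨v, rfl⟩
  set a := ‖θ - θstar‖ with ha
  -- pointwise key inequality
  have hkey : ∀ m i, 2 * η * ⟪θstar - θl m i, gradient (F m) (θl m i)⟫ ≤
      (2 * η * (F m θstar - sInf (Set.range (F m))) - μ * η * (1 - η) * a ^ 2)
        + μ * (1 - η) * ‖θl m i - θ‖ ^ 2 := by
    intro m i
    have hsc' := hsc m θstar (θl m i)
    have hinf := hinf_le m (θl m i)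
    set b := ‖θl m i - θ‖ with hb
    have hnorm : ‖θstar - θl m i‖ ^ 2 ≥ (1 - η) * a ^ 2 + (1 - 1/η) * b ^ 2 := by
      have hx : θstar - θl m i = -((θ - θstar) + (θl m i - θ)) := by abel
      have hsum : ‖θstar - θl m i‖ ^ 2 = ‖(θ - θstar) + (θl m i - θ)‖ ^ 2 := by
        rw [hx, norm_neg]
      have hexp := norm_add_sq_real (θ - θstar) (θl m i - θ)
      have hip : -(a * b) ≤ ⟪θ - θstar, θl m i - θ⟫ := by
        have := abs_real_inner_le_norm (θ - θstar) (θl m i - θ)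
        have := neg_abs_le (⟪θ - θstar, θl m i - θ⟫ : ℝ)
        rw [ha, hb]; linarith
      have h1η : 1/η > 0 := by positivity
      rw [hsum, hexp]
      have hq : η * a ^ 2 + 2 * ⟪θ - θstar, θl m i - θ⟫ + (1/η) * b ^ 2 ≥ 0 := by
        have hsq : (0:ℝ) ≤ (η * a - b) ^ 2 / η := by positivity
        have : (η * a - b) ^ 2 / η = η * a ^ 2 - 2 * (a * b) + (1/η) * b ^ 2 := by
          field_simp; ring
        nlinarith
      simp only [ha, hb] at *
      nlinarith
    have hrev : ‖θstar - θl m i‖ = ‖θl m i - θstar‖ := norm_sub_rev _ _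
    have h2 := mul_le_mul_of_nonneg_left hnorm (mul_nonneg hμ.le hη0.le)
    have h3 : μ * η * ((1 - η) * a ^ 2 + (1 - 1/η) * b ^ 2)
        = μ * η * (1 - η) * a ^ 2 - μ * (1 - η) * b ^ 2 := by
      field_simp; ring
    rw [h3] at h2
    have h4 := mul_le_mul_of_nonneg_left hsc' (by positivity : (0:ℝ) ≤ 2 * η)
    have h5 := mul_le_mul_of_nonneg_left hinf (by positivity : (0:ℝ) ≤ 2 * η)
    rw [hrev] at h4
    nlinarith [h2, h4, h5]
  -- sum over i
  have hcard : ((Finset.Icc 2 τ).card : ℝ) = (τ : ℝ) - 1 := by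
    rw [Nat.card_Icc]
    have : τ + 1 - 2 = τ - 1 := by omega
    rw [this, Nat.cast_sub hτ, Nat.cast_one]
  have hτ1 : (0:ℝ) ≤ (τ:ℝ) - 1 := by
    have : (1:ℝ) ≤ (τ:ℝ) := by exact_mod_cast hτ
    linarith
  have hsum_i : ∀ m, ∑ i ∈ Finset.Icc 2 τ, 2 * η * ⟪θstar - θl m i, gradient (F m) (θl m i)⟫ ≤
      ((τ:ℝ) - 1) * (2 * η * (F m θstar - sInf (Set.range (F m))) - μ * η * (1 - η) * a ^ 2)
        + μ * (1 - η) * ∑ i ∈ Finset.Icc 2 τ, ‖θl m i - θ‖ ^ 2 := by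
    intro m
    calc ∑ i ∈ Finset.Icc 2 τ, 2 * η * ⟪θstar - θl m i, gradient (F m) (θl m i)⟫
        ≤ ∑ i ∈ Finset.Icc 2 τ,
          ((2 * η * (F m θstar - sInf (Set.range (F m))) - μ * η * (1 - η) * a ^ 2)
            + μ * (1 - η) * ‖θl m i - θ‖ ^ 2) :=
          Finset.sum_le_sum (fun i _ => hkey m i)
      _ = ((τ:ℝ) - 1) * (2 * η * (F m θstar - sInf (Set.range (F m))) - μ * η * (1 - η) * a ^ 2)
            + μ * (1 - η) * ∑ i ∈ Finset.Icc 2 τ, ‖θl m i - θ‖ ^ 2 := by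
          rw [Finset.sum_add_distrib, Finset.sum_const, ← Finset.mul_sum, nsmul_eq_mul, hcard]
  -- sum over m
  have hsum_m : ∑ m, ∑ i ∈ Finset.Icc 2 τ, 2 * η * ⟪θstar - θl m i, gradient (F m) (θl m i)⟫ ≤
      ((τ:ℝ) - 1) * (2 * η * ((∑ m, F m θstar) - ∑ m, sInf (Set.range (F m)))
          - (M:ℝ) * (μ * η * (1 - η) * a ^ 2))
        + μ * (1 - η) * ∑ m, ∑ i ∈ Finset.Icc 2 τ, ‖θl m i - θ‖ ^ 2 := by
    calc ∑ m, ∑ i ∈ Finset.Icc 2 τ, 2 * η * ⟪θstar - θl m i, gradient (F m) (θl m i)⟫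
        ≤ ∑ m, (((τ:ℝ) - 1) * (2 * η * (F m θstar - sInf (Set.range (F m)))
              - μ * η * (1 - η) * a ^ 2)
            + μ * (1 - η) * ∑ i ∈ Finset.Icc 2 τ, ‖θl m i - θ‖ ^ 2) :=
          Finset.sum_le_sum (fun m _ => hsum_i m)
      _ = ((τ:ℝ) - 1) * (2 * η * ((∑ m, F m θstar) - ∑ m, sInf (Set.range (F m)))
              - (M:ℝ) * (μ * η * (1 - η) * a ^ 2))
            + μ * (1 - η) * ∑ m, ∑ i ∈ Finset.Icc 2 τ, ‖θl m i - θ‖ ^ 2 := by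
          rw [Finset.sum_add_distrib, ← Finset.mul_sum, ← Finset.mul_sum,
            Finset.sum_sub_distrib, ← Finset.mul_sum, Finset.sum_sub_distrib,
            Finset.sum_const, Finset.card_univ, Fintype.card_fin, nsmul_eq_mul]
  have hΓ' : (∑ m, F m θstar) - ∑ m, sInf (Set.range (F m)) = (M:ℝ) * Γ := by
    rw [hΓ, hFbar]
    field_simp
  rw [hΓ'] at hsum_m
  have hLHS : 2 * η / (M:ℝ) * ∑ m, ∑ i ∈ Finset.Icc 2 τ, ⟪θstar - θl m i, gradient (F m) (θl m i)⟫
      = (M:ℝ)⁻¹ * ∑ m, ∑ i ∈ Finset.Icc 2 τ, 2 * η * ⟪θstar - θl m i, gradient (F m) (θl m i)⟫ := by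
    rw [Finset.mul_sum, Finset.mul_sum]
    refine Finset.sum_congr rfl fun m _ => ?_
    rw [Finset.mul_sum, Finset.mul_sum]
    exact Finset.sum_congr rfl fun i _ => by ring
  rw [hLHS]
  have hM' : (M:ℝ)⁻¹ > 0 := by positivity
  have := mul_le_mul_of_nonneg_left hsum_m hM'.le
  calc (M:ℝ)⁻¹ * ∑ m, ∑ i ∈ Finset.Icc 2 τ, 2 * η * ⟪θstar - θl m i, gradient (F m) (θl m i)⟫
      ≤ (M:ℝ)⁻¹ * (((τ:ℝ) - 1) * (2 * η * ((M:ℝ) * Γ) - (M:ℝ) * (μ * η * (1 - η) * a ^ 2))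
          + μ * (1 - η) * ∑ m, ∑ i ∈ Finset.Icc 2 τ, ‖θl m i - θ‖ ^ 2) := this
    _ = -μ * η * (1 - η) * ((τ : ℝ) - 1) * a ^ 2
          + μ * (1 - η) / (M : ℝ) * ∑ m, ∑ i ∈ Finset.Icc 2 τ, ‖θl m i - θ‖ ^ 2
          + 2 * η * ((τ : ℝ) - 1) * Γ := by
        field_simp
        ring
end
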